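/- In the total complex of $\mathcal{L}^{\mathbb{Q}}_{T^n}(\mathbb{Q}[t];\mathbb{Q})$, for all $k \geq 1$: $(t^k)_{\mathbf{1}_n} \sim \sum \prod_{i=1}^k t_{\mathbf{w}_i}$, where the sum runs over all $k$-tuples $(\mathbf{w}_1, \ldots, \mathbf{w}_k)$ of nonzero coordinates in $\{0,1\}^n$ with $\mathbf{w}_1 + \cdots + \mathbf{w}_k = \mathbf{1}_n$. In particular: (a) if $k = n$ then $(t^n)_{\mathbf{1}_n} \sim n! \prod_{i=1}^n t_{\mathbf{e}_i}$ where $\mathbf{e}_i$ is the $i$-th standard unit coordinate (the diagonal class maps to $n!$ times the volume form); and (b) if $k > n$ then $(t^k)_{\mathbf{1}_n} \sim 0$. -/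

import Mathlib

/-!
The multisimplicial Loday complex `𝓛^ℚ_{Tⁿ}(ℚ[t]; ℚ)` of the `n`-torus with reduced
coefficients, in the multidegrees needed for the moving lemmas.

A chain in multidegree `𝟏ₙ + eᵢ`-or-lower is a `ℚ`-linear combination of monomial
multi-matrices with entries powers of `t` (entry `ℚ` at the basepoint coordinate `𝟎ₙ`);
such a monomial is recorded by its exponent multi-matrix, a finitely supported function
`e : (Fin n → ℕ) → ℕ` (the exponent of `t` at each coordinate) with `e 𝟎 = 0`.  Chains
form the monoid algebra `Ch n` of these exponent matrices (multiplication of monomials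
adds exponents coordinatewise, matching multiplication of multi-matrices).  `elem v x` is
the multi-matrix `x_𝐯` with `x ∈ ℚ[t]` at coordinate `𝐯` and `1` elsewhere (so
`elem 𝟎 t = 0`: `t` acts as `0` on the coefficient copy of `ℚ`).  `D i j` is the `j`-th
face map of the simplicial circle in the `i`-th direction (for circle-degree `2 → 1`),
`del i = D i 0 - D i 1 + D i 2` the corresponding differential, `Deg b` the chains of
multidegree (entrywise) at most `b`, and `Homologous x y` says the difference `x - y` is
a boundary coming from total multidegree `n + 1`, i.e. from the multidegrees `𝟏ₙ + eᵢ`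
(in the directions `i'` with multidegree `1` the cyclic differentials vanish).
-/

/-- Coordinates of a multi-matrix. -/
abbrev Coord (n : ℕ) := Fin n → ℕ

/-- Exponent multi-matrices: the exponent at the basepoint coordinate `𝟎` is `0`. -/
noncomputable def ExpM (n : ℕ) : AddSubmonoid ((Coord n) →₀ ℕ) where
  carrier := {e | e 0 = 0}
  add_mem' := by intro a b ha hb; simp_all
  zero_mem' := by simp

/-- Chains of the (reduced-coefficient) multisimplicial Loday complex of `ℚ[t]`. -/
abbrev Ch (n : ℕ) := AddMonoidAlgebra ℚ (ExpM n)

/-- The monomial with a single `t` at coordinate `v` (zero if `v` is the basepoint,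
since `t` acts as `0` on the coefficients `ℚ`). -/
noncomputable def tv {n : ℕ} (v : Coord n) : Ch n :=
  if h : v = 0 then 0
  else AddMonoidAlgebra.single ⟨Finsupp.single v 1, Finsupp.single_eq_of_ne (Ne.symm h)⟩ 1

/-- `elem v x = x_𝐯`: the multi-matrix with `x ∈ ℚ[t]` at coordinate `v`, `1` elsewhere. -/
noncomputable def elem {n : ℕ} (v : Coord n) (x : Polynomial ℚ) : Ch n :=
  Polynomial.aeval (tv v) x

/-- The `j`-th face map of the simplicial circle `S¹` from simplicial degree `2` to
degree `1`, on coordinates `{0,1,2} → {0,1}` (`0` the basepoint). -/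
def cface (j c : ℕ) : ℕ := (if 3 ≤ j + c then c - 1 else c) % 2

/-- The `j`-th face in direction `i` on coordinates. -/
def phi {n : ℕ} (i : Fin n) (j : ℕ) (c : Coord n) : Coord n :=
  Function.update c i (cface j (c i))

/-- Face of a monomial: push exponents forward along `phi i j` (adding exponents that
land at the same coordinate = multiplying the entries over each fiber); if a positive
exponent lands on the basepoint the result is `0` (reduced coefficients). -/
noncomputable def Dsingle {n : ℕ} (i : Fin n) (j : ℕ) (e : ExpM n) : Ch n :=
  if h : (Finsupp.mapDomain (phi i j) (e : Coord n →₀ ℕ)) 0 = 0 then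
    AddMonoidAlgebra.single ⟨Finsupp.mapDomain (phi i j) (e : Coord n →₀ ℕ), h⟩ 1
  else 0

/-- The `j`-th face map in direction `i`, extended linearly to chains. -/
noncomputable def D {n : ℕ} (i : Fin n) (j : ℕ) (a : Ch n) : Ch n :=
  Finsupp.sum a.coeff fun e q => q • Dsingle i j e

/-- The simplicial differential in direction `i` (from multidegree `𝟏ₙ + eᵢ`). -/
noncomputable def del {n : ℕ} (i : Fin n) (a : Ch n) : Ch n :=
  D i 0 a - D i 1 a + D i 2 a

/-- The monomial `e` lies in the box of multidegree `b`. -/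
def inBox {n : ℕ} (b : Coord n) (e : ExpM n) : Prop :=
  ∀ c ∈ (e : Coord n →₀ ℕ).support, ∀ i, c i ≤ b i

/-- Chains of multidegree (entrywise at most) `b`. -/
noncomputable def Deg {n : ℕ} (b : Coord n) : Submodule ℚ (Ch n) :=
  Submodule.span ℚ {x | ∃ e : ExpM n, inBox b e ∧ x = AddMonoidAlgebra.single e 1}

/-- Boundaries in multidegree `𝟏ₙ`: images of the total differential on chains of the
multidegrees `𝟏ₙ + eᵢ` (in directions of multidegree `1` the cyclic differentials
vanish, so the total differential is `± del i` there). -/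
noncomputable def bdry (n : ℕ) : Submodule ℚ (Ch n) :=
  Submodule.span ℚ {x | ∃ (i : Fin n) (z : Ch n),
    z ∈ Deg (Function.update (fun _ => 1) i 2) ∧ x = del i z}

/-- Two chains of multidegree `𝟏ₙ` are homologous if their difference is a boundary. -/
def Homologous {n : ℕ} (x y : Ch n) : Prop := x - y ∈ bdry n

/-!
STATEMENT 15: in the total complex of `𝓛^ℚ_{Tⁿ}(ℚ[t]; ℚ)`, for all `k ≥ 1`:
`(t^k)_{𝟏ₙ} ∼ ∑ ∏_{i=1}^k t_{𝐰ᵢ}`, the sum running over all `k`-tuples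
`(𝐰₁, …, 𝐰ₖ)` of nonzero coordinates in `{0,1}ⁿ` with `𝐰₁ + ⋯ + 𝐰ₖ = 𝟏ₙ`.
In particular: (a) if `k = n` then `(tⁿ)_{𝟏ₙ} ∼ n! ∏_{i=1}^n t_{𝐞ᵢ}` (the diagonal class
maps to `n!` times the volume form); (b) if `k > n` then `(t^k)_{𝟏ₙ} ∼ 0`.
-/

----------------------------------------------------------------
-- basics

lemma tv_zero {n : ℕ} : tv (0 : Coord n) = 0 := by simp [tv]

lemma elem_pow {n : ℕ} (v : Coord n) (k : ℕ) :
    elem v ((Polynomial.X : Polynomial ℚ) ^ k) = (tv v) ^ k := by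
  simp [elem, map_pow]

lemma elem_X {n : ℕ} (v : Coord n) :
    elem v (Polynomial.X : Polynomial ℚ) = tv v := by
  simp [elem]

-- multiplicativity of Dsingle
lemma Dsingle_add {n : ℕ} (i : Fin n) (j : ℕ) (e e' : ExpM n) :
    Dsingle i j (e + e') = Dsingle i j e * Dsingle i j e' := by
  have hmap : Finsupp.mapDomain (phi i j) ((e + e' : ExpM n) : Coord n →₀ ℕ)
      = Finsupp.mapDomain (phi i j) (e : Coord n →₀ ℕ)
        + Finsupp.mapDomain (phi i j) (e' : Coord n →₀ ℕ) := by
    rw [← Finsupp.mapDomain_add]; rfl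
  by_cases h1 : (Finsupp.mapDomain (phi i j) (e : Coord n →₀ ℕ)) 0 = 0 <;>
    by_cases h2 : (Finsupp.mapDomain (phi i j) (e' : Coord n →₀ ℕ)) 0 = 0
  · have h : (Finsupp.mapDomain (phi i j) ((e + e' : ExpM n) : Coord n →₀ ℕ)) 0 = 0 := by
      rw [hmap]; simp [h1, h2]
    rw [Dsingle, Dsingle, Dsingle, dif_pos h, dif_pos h1, dif_pos h2,
      AddMonoidAlgebra.single_mul_single]
    congr 1
    · ext : 1; simpa using hmap
    · norm_num
  · have h : ¬ (Finsupp.mapDomain (phi i j) ((e + e' : ExpM n) : Coord n →₀ ℕ)) 0 = 0 := by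
      rw [hmap]; simp [Finsupp.add_apply, h1, h2]
    simp only [Dsingle]; rw [dif_neg h, dif_neg h2, mul_zero]
  · have h : ¬ (Finsupp.mapDomain (phi i j) ((e + e' : ExpM n) : Coord n →₀ ℕ)) 0 = 0 := by
      rw [hmap]; simp [Finsupp.add_apply, h1, h2]
    simp only [Dsingle]; rw [dif_neg h, dif_neg h1, zero_mul]
  · have h : ¬ (Finsupp.mapDomain (phi i j) ((e + e' : ExpM n) : Coord n →₀ ℕ)) 0 = 0 := by
      rw [hmap]; simp [Finsupp.add_apply, h1, h2]
    simp only [Dsingle]; rw [dif_neg h, dif_neg h1, zero_mul]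

lemma Dsingle_zero {n : ℕ} (i : Fin n) (j : ℕ) :
    Dsingle i j (0 : ExpM n) = 1 := by
  have h0 : ((0 : ExpM n) : Coord n →₀ ℕ) = 0 := rfl
  rw [Dsingle]
  rw [dif_pos (by simp [h0])]
  rfl

noncomputable def Dhom {n : ℕ} (i : Fin n) (j : ℕ) : Ch n →ₐ[ℚ] Ch n :=
  AddMonoidAlgebra.lift ℚ (Ch n) (ExpM n)
    { toFun := fun e => Dsingle i j e.toAdd
      map_one' := Dsingle_zero i j
      map_mul' := fun e e' => Dsingle_add i j e.toAdd e'.toAdd }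

lemma D_eq {n : ℕ} (i : Fin n) (j : ℕ) (a : Ch n) : D i j a = Dhom i j a := by
  rw [Dhom, AddMonoidAlgebra.lift_apply]
  rfl

lemma D_mul {n : ℕ} (i : Fin n) (j : ℕ) (a b : Ch n) :
    D i j (a * b) = D i j a * D i j b := by
  rw [D_eq, D_eq, D_eq, map_mul]

lemma D_pow {n : ℕ} (i : Fin n) (j : ℕ) (a : Ch n) (k : ℕ) :
    D i j (a ^ k) = (D i j a) ^ k := by
  rw [D_eq, D_eq, map_pow]

lemma cface_zero (j : ℕ) : cface j 0 = 0 := by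
  unfold cface; split <;> rfl

lemma phi_of_zero {n : ℕ} {i : Fin n} {v : Coord n} (j : ℕ) (h : v i = 0) :
    phi i j v = v := by
  unfold phi
  rw [h, cface_zero]
  rw [← h]
  exact Function.update_eq_self i v

lemma D_single {n : ℕ} (i : Fin n) (j : ℕ) (e : ExpM n) (q : ℚ) :
    D i j (AddMonoidAlgebra.single e q) = q • Dsingle i j e := by
  unfold D
  rw [AddMonoidAlgebra.coeff_single]
  exact Finsupp.sum_single_index (by simp)

lemma D_tv {n : ℕ} (i : Fin n) (j : ℕ) (v : Coord n) :
    D i j (tv v) = tv (phi i j v) := by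
  by_cases hv : v = 0
  · subst hv
    rw [phi_of_zero j rfl, tv_zero]
    show D i j 0 = 0
    unfold D; simp
  · rw [tv, dif_neg hv, D_single, one_smul, Dsingle]
    have hmap : Finsupp.mapDomain (phi i j)
        ((⟨Finsupp.single v 1, Finsupp.single_eq_of_ne (Ne.symm hv)⟩ : ExpM n) : Coord n →₀ ℕ)
        = Finsupp.single (phi i j v) 1 := Finsupp.mapDomain_single
    by_cases hp : phi i j v = 0
    · rw [dif_neg]
      · rw [tv, dif_pos hp]
      · rw [hmap, hp]
        simp
    · rw [dif_pos (by rw [hmap]; exact Finsupp.single_eq_of_ne (Ne.symm hp))]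
      rw [tv, dif_neg hp]
      congr 1
      ext : 1
      simpa using hmap

-- the six cface values we need
lemma cface01 : cface 0 1 = 1 := rfl
lemma cface11 : cface 1 1 = 1 := rfl
lemma cface21 : cface 2 1 = 0 := rfl
lemma cface02 : cface 0 2 = 0 := rfl
lemma cface12 : cface 1 2 = 1 := rfl
lemma cface22 : cface 2 2 = 1 := rfl

lemma phi_one_0 {n : ℕ} {i : Fin n} {v : Coord n} (h : v i = 1) : phi i 0 v = v := by
  unfold phi; rw [h, cface01, ← h]; exact Function.update_eq_self i v
lemma phi_one_1 {n : ℕ} {i : Fin n} {v : Coord n} (h : v i = 1) : phi i 1 v = v := by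
  unfold phi; rw [h, cface11, ← h]; exact Function.update_eq_self i v
lemma phi_one_2 {n : ℕ} {i : Fin n} {v : Coord n} (h : v i = 1) :
    phi i 2 v = Function.update v i 0 := by
  unfold phi; rw [h, cface21]

lemma phi_upd2 {n : ℕ} {i : Fin n} (v : Coord n) (j : ℕ) :
    phi i j (Function.update v i 2) = Function.update v i (cface j 2) := by
  unfold phi
  rw [Function.update_self, Function.update_idem]

----------------------------------------------------------------
-- Deg lemmas

lemma one_mem_Deg {n : ℕ} (b : Coord n) : (1 : Ch n) ∈ Deg b := by
  apply Submodule.subset_span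
  refine ⟨0, ?_, rfl⟩
  intro c hc
  simp [ExpM] at hc

lemma tv_mem_Deg {n : ℕ} {b : Coord n} {v : Coord n} (h : ∀ i, v i ≤ b i) :
    tv v ∈ Deg b := by
  by_cases hv : v = 0
  · rw [hv, tv_zero]; exact Submodule.zero_mem _
  · rw [tv, dif_neg hv]
    apply Submodule.subset_span
    refine ⟨_, ?_, rfl⟩
    intro c hc i
    have : c = v := by
      have := Finsupp.support_single_subset hc
      simpa using this
    rw [this]; exact h i

lemma Deg_mul {n : ℕ} {b : Coord n} {x y : Ch n}
    (hx : x ∈ Deg b) (hy : y ∈ Deg b) : x * y ∈ Deg b := by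
  induction hx using Submodule.span_induction with
  | mem z hz =>
    induction hy using Submodule.span_induction with
    | mem w hw =>
      obtain ⟨e, he, rfl⟩ := hz
      obtain ⟨f, hf, rfl⟩ := hw
      apply Submodule.subset_span
      refine ⟨e + f, ?_, ?_⟩
      · intro c hc i
        have hsub : ((e + f : ExpM n) : Coord n →₀ ℕ).support ⊆
            (e : Coord n →₀ ℕ).support ∪ (f : Coord n →₀ ℕ).support := by
          have : ((e + f : ExpM n) : Coord n →₀ ℕ)
              = (e : Coord n →₀ ℕ) + (f : Coord n →₀ ℕ) := rfl
          rw [this]; exact Finsupp.support_add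
        rcases Finset.mem_union.mp (hsub hc) with h' | h'
        · exact he c h' i
        · exact hf c h' i
      · rw [AddMonoidAlgebra.single_mul_single, one_mul]
    | zero => rw [mul_zero]; exact Submodule.zero_mem _
    | add u v hu hv ihu ihv => rw [mul_add]; exact Submodule.add_mem _ ihu ihv
    | smul q u hu ihu => rw [Algebra.mul_smul_comm]; exact Submodule.smul_mem _ _ ihu
  | zero => rw [zero_mul]; exact Submodule.zero_mem _
  | add u v hu hv ihu ihv => rw [add_mul]; exact Submodule.add_mem _ ihu ihv
  | smul q u hu ihu => rw [Algebra.smul_mul_assoc]; exact Submodule.smul_mem _ _ ihu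

lemma Deg_mono {n : ℕ} {b b' : Coord n} (h : ∀ i, b i ≤ b' i) : Deg b ≤ Deg b' := by
  apply Submodule.span_mono
  rintro x ⟨e, he, rfl⟩
  exact ⟨e, fun c hc i => le_trans (he c hc i) (h i), rfl⟩

lemma tv_pow_mem_Deg {n : ℕ} {b : Coord n} {v : Coord n} (h : ∀ i, v i ≤ b i) (k : ℕ) :
    (tv v) ^ k ∈ Deg b := by
  induction k with
  | zero => simpa using one_mem_Deg b
  | succ m ih => rw [pow_succ]; exact Deg_mul ih (tv_mem_Deg h)

----------------------------------------------------------------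
-- relative homology framework

noncomputable def bdryIn {n : ℕ} (S : Finset (Fin n)) : Submodule ℚ (Ch n) :=
  Submodule.span ℚ {x | ∃ i ∈ S, ∃ z ∈ Deg (Function.update (fun _ => 1) i 2), x = del i z}

def HomIn {n : ℕ} (S : Finset (Fin n)) (x y : Ch n) : Prop := x - y ∈ bdryIn S

lemma bdryIn_univ {n : ℕ} : bdryIn (Finset.univ : Finset (Fin n)) = bdry n := by
  unfold bdryIn bdry
  congr 1
  ext x
  simp

lemma HomIn.toHomologous {n : ℕ} {x y : Ch n}
    (h : HomIn Finset.univ x y) : Homologous x y := by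
  rw [Homologous, ← bdryIn_univ]; exact h

lemma HomIn.of_eq {n : ℕ} {S : Finset (Fin n)} {x y : Ch n} (h : x = y) : HomIn S x y := by
  rw [HomIn, h, sub_self]; exact Submodule.zero_mem _

lemma HomIn.refl {n : ℕ} (S : Finset (Fin n)) (x : Ch n) : HomIn S x x := HomIn.of_eq rfl

lemma HomIn.trans {n : ℕ} {S : Finset (Fin n)} {x y z : Ch n}
    (h1 : HomIn S x y) (h2 : HomIn S y z) : HomIn S x z := by
  rw [HomIn]
  have e : x - z = (x - y) + (y - z) := by ring
  rw [e]
  exact Submodule.add_mem _ h1 h2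

lemma HomIn.mono {n : ℕ} {S S' : Finset (Fin n)} (hS : S ⊆ S') {x y : Ch n}
    (h : HomIn S x y) : HomIn S' x y := by
  refine Submodule.span_mono ?_ h
  rintro u ⟨i, hi, z, hz, rfl⟩
  exact ⟨i, hS hi, z, hz, rfl⟩

lemma HomIn.sum {n : ℕ} {S : Finset (Fin n)} {ι : Type*} (s : Finset ι)
    (f g : ι → Ch n) (h : ∀ t ∈ s, HomIn S (f t) (g t)) :
    HomIn S (∑ t ∈ s, f t) (∑ t ∈ s, g t) := by
  rw [HomIn, ← Finset.sum_sub_distrib]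
  exact Submodule.sum_mem _ h

lemma HomIn.mul_left {n : ℕ} {S : Finset (Fin n)} {c x y : Ch n}
    (hc1 : ∀ i ∈ S, ∀ j, D i j c = c) (hc2 : c ∈ Deg (fun _ => 1))
    (h : HomIn S x y) : HomIn S (c * x) (c * y) := by
  rw [HomIn, ← mul_sub]
  rw [HomIn] at h
  revert h
  generalize x - y = u
  intro h
  induction h using Submodule.span_induction with
  | mem u hu =>
    obtain ⟨i, hi, z, hz, rfl⟩ := hu
    have key : c * del i z = del i (c * z) := by
      unfold del
      rw [D_mul, D_mul, D_mul, hc1 i hi 0, hc1 i hi 1, hc1 i hi 2]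
      ring
    rw [key]
    apply Submodule.subset_span
    refine ⟨i, hi, c * z, ?_, rfl⟩
    exact Deg_mul (Deg_mono (fun i' => by
      by_cases h' : i' = i <;> simp [Function.update, h']) hc2) hz
  | zero => rw [mul_zero]; exact Submodule.zero_mem _
  | add u v hu hv ihu ihv => rw [mul_add]; exact Submodule.add_mem _ ihu ihv
  | smul q u hu ihu => rw [Algebra.mul_smul_comm]; exact Submodule.smul_mem _ _ ihu

----------------------------------------------------------------
-- the elementary moving relation

lemma rel1 {n : ℕ} {S : Finset (Fin n)} {i : Fin n} (hi : i ∈ S)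
    (v w : Coord n) (hv : v i = 1) (hw : w i = 1)
    (hv1 : ∀ j, v j ≤ 1) (hw1 : ∀ j, w j ≤ 1) (a c : ℕ) :
    HomIn S ((tv v) ^ a * (tv w) ^ c)
      ((tv v) ^ a * (tv (Function.update w i 0)) ^ c
        + (tv (Function.update v i 0)) ^ a * (tv w) ^ c) := by
  set z : Ch n := (tv v) ^ a * (tv (Function.update w i 2)) ^ c with hzdef
  have hzdeg : z ∈ Deg (Function.update (fun _ => 1) i 2) := by
    apply Deg_mul
    · apply tv_pow_mem_Deg
      intro j
      by_cases h : j = i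
      · subst h; rw [hv]; simp [Function.update_self]
      · simp [Function.update_apply, h]; exact hv1 j
    · apply tv_pow_mem_Deg
      intro j
      by_cases h : j = i
      · subst h; simp [Function.update_self]
      · simp [Function.update_apply, h]; exact hw1 j
  have hupdw : Function.update w i 1 = w := by
    conv_lhs => rw [← hw]
    exact Function.update_eq_self i w
  have hD : ∀ j, D i j z
      = (tv (phi i j v)) ^ a * (tv (Function.update w i (cface j 2))) ^ c := by
    intro j
    rw [hzdef, D_mul, D_pow, D_pow, D_tv, D_tv, phi_upd2]
  have h0 : D i 0 z = (tv v) ^ a * (tv (Function.update w i 0)) ^ c := by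
    rw [hD, phi_one_0 hv, cface02]
  have h1 : D i 1 z = (tv v) ^ a * (tv w) ^ c := by
    rw [hD, phi_one_1 hv, cface12, hupdw]
  have h2 : D i 2 z = (tv (Function.update v i 0)) ^ a * (tv w) ^ c := by
    rw [hD, phi_one_2 hv, cface22, hupdw]
  rw [HomIn]
  have e : (tv v) ^ a * (tv w) ^ c
      - ((tv v) ^ a * (tv (Function.update w i 0)) ^ c
        + (tv (Function.update v i 0)) ^ a * (tv w) ^ c) = -(del i z) := by
    rw [del, h0, h1, h2]; ring
  rw [e]
  exact Submodule.neg_mem _ (Submodule.subset_span ⟨i, hi, z, hzdeg, rfl⟩)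

----------------------------------------------------------------
-- splitting lemma

def suppF {n : ℕ} (b : Fin n → Fin 2) : Finset (Fin n) :=
  Finset.univ.filter (fun i => b i ≠ 0)

def cv {n : ℕ} (b : Fin n → Fin 2) : Coord n := fun j => (b j : ℕ)

def vT {n : ℕ} (b : Fin n → Fin 2) (T : Finset (Fin n)) : Coord n :=
  fun j => if j ∈ T then 0 else (b j : ℕ)

def wST {n : ℕ} (b : Fin n → Fin 2) (S T : Finset (Fin n)) : Coord n :=
  fun j => if j ∈ T then 1 else if j ∈ S then 0 else (b j : ℕ)

lemma fin2_le (x : Fin 2) : (x : ℕ) ≤ 1 := by omega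

lemma fin2_ne_iff (x : Fin 2) : x ≠ 0 ↔ (x : ℕ) = 1 := by
  constructor
  · intro h
    have h2 : (x : ℕ) ≠ 0 := fun hc => h (Fin.ext (by simpa using hc))
    omega
  · intro h hc
    rw [hc] at h
    simp at h

lemma mem_suppF {n : ℕ} {b : Fin n → Fin 2} {i : Fin n} :
    i ∈ suppF b ↔ (b i : ℕ) = 1 := by
  simp [suppF, fin2_ne_iff]

lemma L2 {n : ℕ} (b : Fin n → Fin 2) (a c : ℕ) (S : Finset (Fin n)) (hS : S ⊆ suppF b) :
    HomIn (suppF b) ((tv (cv b)) ^ (a + c))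
      (∑ T ∈ S.powerset, (tv (vT b T)) ^ a * (tv (wST b S T)) ^ c) := by
  induction S using Finset.induction_on with
  | empty =>
    apply HomIn.of_eq
    rw [Finset.powerset_empty, Finset.sum_singleton]
    have h1 : vT b ∅ = cv b := by funext j; simp [vT, cv]
    have h2 : wST b ∅ ∅ = cv b := by funext j; simp [wST, cv]
    rw [h1, h2, ← pow_add]
  | @insert i S hiS ih =>
    have hi : (b i : ℕ) = 1 := mem_suppF.mp (hS (Finset.mem_insert_self i S))
    have hS' : S ⊆ suppF b := fun x hx => hS (Finset.mem_insert_of_mem hx)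
    refine HomIn.trans (ih hS') ?_
    have step : ∀ T ∈ S.powerset,
        HomIn (suppF b) ((tv (vT b T)) ^ a * (tv (wST b S T)) ^ c)
          ((tv (vT b T)) ^ a * (tv (wST b (insert i S) T)) ^ c
            + (tv (vT b (insert i T))) ^ a * (tv (wST b (insert i S) (insert i T))) ^ c) := by
      intro T hT
      rw [Finset.mem_powerset] at hT
      have hiT : i ∉ T := fun hc => hiS (hT hc)
      have hv : vT b T i = 1 := by simp [vT, hiT, hi]
      have hw : wST b S T i = 1 := by simp [wST, hiT, hiS, hi]
      have e1 : Function.update (wST b S T) i 0 = wST b (insert i S) T := by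
        funext j
        by_cases h : j = i
        · subst h; simp [Function.update_self, wST, hiT]
        · simp [Function.update_apply, h, wST, Finset.mem_insert, h]
      have e2 : Function.update (vT b T) i 0 = vT b (insert i T) := by
        funext j
        by_cases h : j = i
        · subst h; simp [Function.update_self, vT]
        · simp [Function.update_apply, h, vT, Finset.mem_insert, h]
      have e3 : wST b S T = wST b (insert i S) (insert i T) := by
        funext j
        by_cases h : j = i
        · subst h; simp [wST, hiT, hiS, Finset.mem_insert, hi]
        · simp [wST, Finset.mem_insert, h]
      have := rel1 (mem_suppF.mpr hi) (vT b T) (wST b S T) hv hw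
        (fun j => by unfold vT; split <;> [omega; exact fin2_le _])
        (fun j => by unfold wST; split
                     · omega
                     · split <;> [omega; exact fin2_le _]) a c
      rw [e1, e2] at this
      rw [e3] at this ⊢
      exact this
    refine HomIn.trans (HomIn.sum _ _ _ step) (HomIn.of_eq ?_)
    rw [Finset.sum_add_distrib, Finset.powerset_insert, Finset.sum_union, Finset.sum_image]
    · intro T hT T' hT' hE
      rw [Finset.mem_coe, Finset.mem_powerset] at hT hT'
      have h1 : i ∉ T := fun hc => hiS (hT hc)
      have h2 : i ∉ T' := fun hc => hiS (hT' hc)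
      rw [← Finset.erase_insert h1, ← Finset.erase_insert h2, hE]
    · rw [Finset.disjoint_left]
      intro T hT hT'
      rw [Finset.mem_powerset] at hT
      obtain ⟨T', hT', rfl⟩ := Finset.mem_image.mp hT'
      exact hiS (hT (Finset.mem_insert_self i T'))

----------------------------------------------------------------
-- the main induction

def filt (n k : ℕ) (b : Fin n → Fin 2) : Finset (Fin k → (Fin n → Fin 2)) :=
  Finset.univ.filter (fun W => (∀ i, W i ≠ 0) ∧ ∀ j, (∑ i, ((W i j : ℕ))) = (b j : ℕ))

def bT {n : ℕ} (T : Finset (Fin n)) : Fin n → Fin 2 := fun j => if j ∈ T then 1 else 0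

lemma suppF_bT {n : ℕ} (T : Finset (Fin n)) : suppF (bT T) = T := by
  ext i
  rw [mem_suppF]
  unfold bT
  by_cases h : i ∈ T <;> simp [h]

lemma cv_zero {n : ℕ} : cv (0 : Fin n → Fin 2) = 0 := by
  funext j; simp [cv]

lemma ML_base {n : ℕ} (b : Fin n → Fin 2) :
    HomIn (suppF b) ((tv (cv b)) ^ 1) (∑ W ∈ filt n 1 b, ∏ i, tv (cv (W i))) := by
  apply HomIn.of_eq
  rw [pow_one]
  by_cases hb : b = 0
  · subst hb
    rw [cv_zero, tv_zero]
    rw [eq_comm]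
    apply Finset.sum_eq_zero
    intro W hW
    rw [filt, Finset.mem_filter] at hW
    obtain ⟨-, h1, h2⟩ := hW
    exact absurd (funext fun j => Fin.ext (by simpa using h2 j) : W 0 = 0) (h1 0)
  · have : filt n 1 b = {fun _ => b} := by
      ext W
      rw [filt, Finset.mem_filter, Finset.mem_singleton]
      constructor
      · rintro ⟨-, h1, h2⟩
        funext i j
        have : i = 0 := Subsingleton.elim i 0
        subst this
        exact Fin.ext (by simpa using h2 j)
      · rintro rfl
        exact ⟨Finset.mem_univ _, fun i => hb, fun j => by simp⟩
    rw [this, Finset.sum_singleton, Fin.prod_univ_one]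

lemma fin2_eq0 (x : Fin 2) : x = 0 ↔ (x : ℕ) = 0 := by
  rw [Fin.ext_iff]; rfl

lemma ML_reindex {n k : ℕ} (b : Fin n → Fin 2) :
    ∑ T ∈ (suppF b).powerset, ∑ W' ∈ filt n k (bT T), tv (vT b T) * ∏ i, tv (cv (W' i))
      = ∑ W ∈ filt n (k+1) b, ∏ i, tv (cv (W i)) := by
  classical
  set filt' : Finset (Fin (k+1) → (Fin n → Fin 2)) :=
    Finset.univ.filter (fun W => (∀ i : Fin k, W i.succ ≠ 0)
      ∧ ∀ j, (∑ i, ((W i j : ℕ))) = (b j : ℕ)) with hf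
  have hsub : filt n (k+1) b ⊆ filt' := by
    intro W hW
    rw [filt, Finset.mem_filter] at hW
    obtain ⟨-, h1, h2⟩ := hW
    rw [hf, Finset.mem_filter]
    exact ⟨Finset.mem_univ _, fun i => h1 i.succ, h2⟩
  have hzero : ∀ W ∈ filt', W ∉ filt n (k+1) b → (∏ i, tv (cv (W i))) = 0 := by
    intro W hW hWn
    rw [hf, Finset.mem_filter] at hW
    obtain ⟨-, h1, h2⟩ := hW
    have hW0 : W 0 = 0 := by
      by_contra h0
      apply hWn
      rw [filt, Finset.mem_filter]
      refine ⟨Finset.mem_univ _, ?_, h2⟩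
      intro i
      induction i using Fin.cases with
      | zero => exact h0
      | succ i' => exact h1 i'
    apply Finset.prod_eq_zero (Finset.mem_univ 0)
    rw [hW0, cv_zero, tv_zero]
  rw [Finset.sum_subset hsub hzero]
  rw [Finset.sum_sigma']
  refine Finset.sum_bij'
    (fun p _ => Fin.cons (fun j => if j ∈ p.1 then 0 else b j) p.2)
    (fun W _ => ⟨(suppF b).filter (fun j => W 0 j = 0), Fin.tail W⟩)
    ?_ ?_ ?_ ?_ ?_
  · -- hi : image lands in filt'
    rintro ⟨T, W'⟩ hp
    rw [Finset.mem_sigma, Finset.mem_powerset] at hp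
    obtain ⟨hT, hW'⟩ := hp
    dsimp only
    rw [filt, Finset.mem_filter] at hW'
    obtain ⟨-, hne, hsum⟩ := hW'
    rw [hf, Finset.mem_filter]
    refine ⟨Finset.mem_univ _, ?_, ?_⟩
    · intro i
      rw [Fin.cons_succ]
      exact hne i
    · intro j
      rw [Fin.sum_univ_succ]
      simp only [Fin.cons_succ, Fin.cons_zero]
      rw [hsum j]
      by_cases hj : j ∈ T
      · have : (b j : ℕ) = 1 := mem_suppF.mp (hT hj)
        simp [hj, bT, this]
      · simp [hj, bT]
  · -- hj : inverse lands in sigma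
    intro W hW
    rw [hf, Finset.mem_filter] at hW
    obtain ⟨-, h1, h2⟩ := hW
    rw [Finset.mem_sigma, Finset.mem_powerset]
    refine ⟨Finset.filter_subset _ _, ?_⟩
    rw [filt, Finset.mem_filter]
    refine ⟨Finset.mem_univ _, fun i => h1 i, ?_⟩
    intro j
    have hcol := h2 j
    rw [Fin.sum_univ_succ] at hcol
    have hb : (b j : ℕ) ≤ 1 := fin2_le _
    have hw0 : (W 0 j : ℕ) ≤ 1 := fin2_le _
    show (∑ i, ((Fin.tail W i j : ℕ))) = ((bT ((suppF b).filter (fun j => W 0 j = 0)) j : Fin 2) : ℕ)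
    have htail : ∀ i : Fin k, Fin.tail W i j = W i.succ j := fun i => rfl
    simp only [htail]
    unfold bT
    by_cases hmem : j ∈ (suppF b).filter (fun j => W 0 j = 0)
    · rw [if_pos hmem]
      rw [Finset.mem_filter, mem_suppF, fin2_eq0] at hmem
      omega
    · rw [if_neg hmem]
      rw [Finset.mem_filter, mem_suppF, fin2_eq0] at hmem
      push_neg at hmem
      by_cases hsb : (b j : ℕ) = 1
      · have := hmem hsb
        omega
      · omega
  · -- left inverse
    rintro ⟨T, W'⟩ hp
    rw [Finset.mem_sigma, Finset.mem_powerset] at hp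
    obtain ⟨hT, -⟩ := hp
    have hTe : (suppF b).filter
        (fun j => (Fin.cons (fun j => if j ∈ T then 0 else b j) W' :
          Fin (k+1) → (Fin n → Fin 2)) 0 j = 0) = T := by
      ext j
      rw [Finset.mem_filter]
      rw [Fin.cons_zero]
      constructor
      · rintro ⟨hjs, hj0⟩
        by_contra hjT
        rw [if_neg hjT, fin2_eq0] at hj0
        rw [mem_suppF] at hjs
        omega
      · intro hjT
        exact ⟨hT hjT, by rw [if_pos hjT]⟩
    dsimp only
    rw [hTe, Fin.tail_cons]
  · -- right inverse
    intro W hW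
    rw [hf, Finset.mem_filter] at hW
    obtain ⟨-, h1, h2⟩ := hW
    dsimp only
    funext i
    induction i using Fin.cases with
    | succ i' => rw [Fin.cons_succ]; rfl
    | zero =>
      rw [Fin.cons_zero]
      funext j
      have hcol := h2 j
      rw [Fin.sum_univ_succ] at hcol
      have hb : (b j : ℕ) ≤ 1 := fin2_le _
      have hw0 : (W 0 j : ℕ) ≤ 1 := fin2_le _
      by_cases hmem : j ∈ (suppF b).filter (fun j => W 0 j = 0)
      · rw [if_pos hmem]
        rw [Finset.mem_filter] at hmem
        exact hmem.2.symm
      · rw [if_neg hmem]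
        rw [Finset.mem_filter, mem_suppF, fin2_eq0] at hmem
        push_neg at hmem
        rw [Fin.ext_iff]
        by_cases hsb : (b j : ℕ) = 1
        · have := hmem hsb
          omega
        · omega
  · -- values
    rintro ⟨T, W'⟩ hp
    dsimp only
    rw [Fin.prod_univ_succ]
    simp only [Fin.cons_zero, Fin.cons_succ]
    congr 1
    congr 1
    funext j
    unfold cv vT
    by_cases hj : j ∈ T <;> simp [hj]


lemma ML_step {n k : ℕ} 
    (IH : ∀ b : Fin n → Fin 2,
      HomIn (suppF b) ((tv (cv b)) ^ k) (∑ W ∈ filt n k b, ∏ i, tv (cv (W i))))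
    (b : Fin n → Fin 2) :
    HomIn (suppF b) ((tv (cv b)) ^ (k+1)) (∑ W ∈ filt n (k+1) b, ∏ i, tv (cv (W i))) := by
  have h1 : (tv (cv b)) ^ (k+1) = (tv (cv b)) ^ (1+k) := by rw [add_comm]
  rw [h1]
  refine HomIn.trans (L2 b 1 k (suppF b) (le_refl _)) ?_
  refine HomIn.trans
    (HomIn.sum ((suppF b).powerset) _
      (fun T => ∑ W' ∈ filt n k (bT T), tv (vT b T) * ∏ i, tv (cv (W' i))) ?_)
    (HomIn.of_eq (ML_reindex b))
  intro T hT
  rw [Finset.mem_powerset] at hT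
  have hw : wST b (suppF b) T = cv (bT T) := by
    funext j
    by_cases hj : j ∈ T
    · simp [wST, hj, cv, bT]
    · by_cases hj' : j ∈ suppF b
      · simp [wST, hj, hj', cv, bT]
      · have h0 : (b j : ℕ) = 0 := by
          have h1 := mem_suppF.not.mp hj'
          omega
        simp [wST, hj, hj', cv, bT, h0]
  rw [pow_one, hw]
  have hc1 : ∀ i ∈ suppF (bT T), ∀ j, D i j (tv (vT b T)) = tv (vT b T) := by
    intro i hi j
    rw [suppF_bT] at hi
    rw [D_tv, phi_of_zero j (by simp [vT, hi])]
  have hc2 : tv (vT b T) ∈ Deg (fun _ => 1) := by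
    apply tv_mem_Deg
    intro i
    unfold vT
    split <;> [omega; exact fin2_le _]
  have key0 := HomIn.mul_left hc1 hc2 (IH (bT T))
  rw [suppF_bT] at key0
  have key := HomIn.mono hT key0
  rwa [Finset.mul_sum] at key

lemma ML {n : ℕ} (k : ℕ) (hk : 1 ≤ k) :
    ∀ b : Fin n → Fin 2,
      HomIn (suppF b) ((tv (cv b)) ^ k) (∑ W ∈ filt n k b, ∏ i, tv (cv (W i))) := by
  induction k, hk using Nat.le_induction with
  | base => exact ML_base
  | succ k hk IH => exact ML_step IH

----------------------------------------------------------------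
-- counting for parts (a) and (b)

lemma rowsum_ge {n k : ℕ} (W : Fin k → (Fin n → Fin 2)) (h1 : ∀ i, W i ≠ 0) (i : Fin k) :
    1 ≤ ∑ j, ((W i j : ℕ)) := by
  obtain ⟨j, hj⟩ := Function.ne_iff.mp (h1 i)
  simp only [Pi.zero_apply] at hj
  have h : 1 ≤ (W i j : ℕ) := by
    have hv := (not_congr (fin2_eq0 _)).mp hj
    omega
  exact le_trans h (Finset.single_le_sum (f := fun j => ((W i j : ℕ)))
    (fun _ _ => Nat.zero_le _) (Finset.mem_univ j))

lemma total_eq {n k : ℕ} (W : Fin k → (Fin n → Fin 2))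
    (h2 : ∀ j, (∑ i, ((W i j : ℕ))) = 1) :
    ∑ i, ∑ j, ((W i j : ℕ)) = n := by
  rw [Finset.sum_comm]
  simp [h2]

lemma filt_gt_empty {n k : ℕ} (hnk : n < k) (W : Fin k → (Fin n → Fin 2))
    (hW : W ∈ filt n k (fun _ => 1)) : False := by
  rw [filt, Finset.mem_filter] at hW
  obtain ⟨-, h1, h2⟩ := hW
  have h2' : ∀ j, (∑ i, ((W i j : ℕ))) = (((fun _ => (1 : Fin 2)) j : Fin 2) : ℕ) := h2
  have htot := total_eq W h2'
  have hge : (k : ℕ) ≤ ∑ i, ∑ j, ((W i j : ℕ)) := by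
    calc (k : ℕ) = ∑ _i : Fin k, 1 := by simp
    _ ≤ _ := Finset.sum_le_sum (fun i _ => rowsum_ge W h1 i)
  omega

lemma perm_sum {n : ℕ} :
    ∑ W ∈ filt n n (fun _ => 1), ∏ i, tv (cv (W i))
      = n.factorial • ∏ i : Fin n, tv (fun j => if j = i then (1 : ℕ) else 0) := by
  classical
  rw [eq_comm]
  have hcard : n.factorial = (Finset.univ : Finset (Equiv.Perm (Fin n))).card := by
    simp [Fintype.card_perm]
  rw [hcard, ← Finset.sum_const]
  refine Finset.sum_bij (fun (σ : Equiv.Perm (Fin n)) _ =>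
      (fun i j => if j = σ i then (1 : Fin 2) else 0 : Fin n → (Fin n → Fin 2)))
    ?_ ?_ ?_ ?_
  · -- maps into filt
    intro σ _
    rw [filt, Finset.mem_filter]
    refine ⟨Finset.mem_univ _, ?_, ?_⟩
    · intro i h
      have := congrFun h (σ i)
      simp at this
    · intro j
      have : ∀ i, (((if j = σ i then (1 : Fin 2) else 0) : Fin 2) : ℕ)
          = if i = σ.symm j then 1 else 0 := by
        intro i
        by_cases h : j = σ i
        · rw [if_pos h, if_pos (by rw [h]; simp)]; rfl
        · rw [if_neg h, if_neg (by intro hc; apply h; rw [hc]; simp)]; rfl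
      rw [Finset.sum_congr rfl (fun i _ => this i)]
      rw [Finset.sum_ite_eq']
      simp
  · -- injective
    intro σ _ τ _ h
    ext i
    suffices hs : σ i = τ i by rw [hs]
    have h' := congrFun (congrFun h i) (σ i)
    rw [if_pos rfl] at h'
    by_contra hne
    rw [if_neg hne] at h'
    exact absurd h' (by decide)
  · -- surjective
    intro W hW
    rw [filt, Finset.mem_filter] at hW
    obtain ⟨-, h1, h2⟩ := hW
    have h2' : ∀ j, (∑ i, ((W i j : ℕ))) = 1 := h2
    have hex : ∀ i, ∃ j, W i j ≠ 0 := fun i => Function.ne_iff.mp (h1 i)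
    set f : Fin n → Fin n := fun i => (hex i).choose with hf
    have hfW : ∀ i, W i (f i) ≠ 0 := fun i => (hex i).choose_spec
    have hval : ∀ i, (W i (f i) : ℕ) = 1 := fun i => (fin2_ne_iff _).mp (hfW i)
    -- row sums are 1
    have hr1 : ∀ i, 1 ≤ ∑ j, ((W i j : ℕ)) := rowsum_ge W h1
    have htot : ∑ i, ∑ j, ((W i j : ℕ)) = n := total_eq W h2'
    have hrow : ∀ i, ∑ j, ((W i j : ℕ)) = 1 := by
      have hzero : ∑ i, (∑ j, ((W i j : ℕ)) - 1) = 0 := by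
        have hsplit : ∑ i, (∑ j, ((W i j : ℕ)) - 1) + ∑ _i : Fin n, 1
            = ∑ i, ∑ j, ((W i j : ℕ)) := by
          rw [← Finset.sum_add_distrib]
          refine Finset.sum_congr rfl (fun i _ => ?_)
          have := hr1 i
          omega
        have hn : (∑ _i : Fin n, 1) = n := by simp
        omega
      intro i
      have := (Finset.sum_eq_zero_iff).mp hzero i (Finset.mem_univ i)
      have := hr1 i
      omega
    have hother : ∀ i j, j ≠ f i → W i j = 0 := by
      intro i j hj
      have hsplit := Finset.sum_erase_add Finset.univ (fun j => ((W i j : ℕ))) (Finset.mem_univ (f i))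
      rw [hrow i, hval i] at hsplit
      have hz : ∑ j ∈ Finset.univ.erase (f i), ((W i j : ℕ)) = 0 := by omega
      have := (Finset.sum_eq_zero_iff).mp hz j (Finset.mem_erase.mpr ⟨hj, Finset.mem_univ j⟩)
      rw [fin2_eq0]
      exact this
    have hinj : Function.Injective f := by
      intro i i' hii
      by_contra hne
      have hsub : ({i, i'} : Finset (Fin n)) ⊆ Finset.univ := Finset.subset_univ _
      have hle := Finset.sum_le_sum_of_subset (f := fun i'' => ((W i'' (f i) : ℕ))) hsub
      rw [Finset.sum_pair hne] at hle
      rw [h2' (f i)] at hle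
      have e1 : (W i (f i) : ℕ) = 1 := hval i
      have e2 : (W i' (f i) : ℕ) = 1 := by rw [hii]; exact hval i'
      omega
    have hbij : Function.Bijective f := (Finite.injective_iff_bijective).mp hinj
    refine ⟨Equiv.ofBijective f hbij, Finset.mem_univ _, ?_⟩
    funext i j
    show (if j = f i then (1 : Fin 2) else 0) = W i j
    by_cases h : j = f i
    · rw [if_pos h, h]
      exact (Fin.ext (by rw [hval i]; rfl)).symm
    · rw [if_neg h, (hother i j h)]
  · -- values
    intro σ _
    have : ∀ i, cv (fun j => if j = σ i then (1 : Fin 2) else 0)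
        = (fun j => if j = σ i then (1 : ℕ) else 0) := by
      intro i
      funext j
      unfold cv
      by_cases h : j = σ i <;> simp [h]
    rw [eq_comm]
    calc ∏ i, tv (cv (fun j => if j = σ i then (1 : Fin 2) else 0))
        = ∏ i, tv (fun j => if j = σ i then (1 : ℕ) else 0) := by
          refine Finset.prod_congr rfl (fun i _ => ?_); rw [this i]
      _ = ∏ i, tv (fun j => if j = i then (1 : ℕ) else 0) :=
          Equiv.prod_comp σ (fun i => tv (fun j => if j = i then (1 : ℕ) else 0))

----------------------------------------------------------------
-- final assembly

lemma Homologous.of_homIn_eq {n : ℕ} {x y y' : Ch n}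
    (h : Homologous x y) (e : y = y') : Homologous x y' := by
  rw [← e]; exact h

lemma filt_eq_filter (n k : ℕ) :
    filt n k (fun _ => 1)
      = Finset.univ.filter (fun W : Fin k → (Fin n → Fin 2) =>
          (∀ i, W i ≠ 0) ∧ ∀ j, (∑ i, ((W i j : ℕ))) = 1) := by
  ext W
  rw [filt, Finset.mem_filter, Finset.mem_filter]
  constructor
  · rintro ⟨h0, h1, h2⟩
    exact ⟨h0, h1, fun j => by rw [h2 j]; rfl⟩
  · rintro ⟨h0, h1, h2⟩
    exact ⟨h0, h1, fun j => by rw [h2 j]; rfl⟩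

lemma part1 (n k : ℕ) (hk : 1 ≤ k) :
    Homologous (elem ((fun _ => 1) : Coord n) ((Polynomial.X : Polynomial ℚ) ^ k))
      (∑ W ∈ Finset.univ.filter
          (fun W : Fin k → (Fin n → Fin 2) =>
            (∀ i, W i ≠ 0) ∧ ∀ j, (∑ i, ((W i j : ℕ))) = 1),
        ∏ i, elem (fun j => (W i j : ℕ)) (Polynomial.X : Polynomial ℚ)) := by
  have hsupp : suppF ((fun _ => (1 : Fin 2)) : Fin n → Fin 2) = Finset.univ := by
    ext i; simp [suppF]
  have main := ML (n := n) k hk (fun _ => (1 : Fin 2))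
  rw [hsupp] at main
  have hmain := main.toHomologous
  have e1 : elem ((fun _ => 1) : Coord n) ((Polynomial.X : Polynomial ℚ) ^ k)
      = tv (cv (fun _ => (1 : Fin 2))) ^ k := by
    rw [elem_pow]; rfl
  have e2 : (∑ W ∈ Finset.univ.filter
          (fun W : Fin k → (Fin n → Fin 2) =>
            (∀ i, W i ≠ 0) ∧ ∀ j, (∑ i, ((W i j : ℕ))) = 1),
        ∏ i, elem (fun j => (W i j : ℕ)) (Polynomial.X : Polynomial ℚ))
      = ∑ W ∈ filt n k (fun _ => 1), ∏ i, tv (cv (W i)) := by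
    rw [filt_eq_filter]
    refine Finset.sum_congr rfl (fun W _ => Finset.prod_congr rfl (fun i _ => ?_))
    rw [elem_X]; rfl
  rw [e1, e2]
  exact hmain


theorem diagonal_class_relation (n k : ℕ) (hk : 1 ≤ k) :
    Homologous (elem ((fun _ => 1) : Coord n) ((Polynomial.X : Polynomial ℚ) ^ k))
      (∑ W ∈ Finset.univ.filter
          (fun W : Fin k → (Fin n → Fin 2) =>
            (∀ i, W i ≠ 0) ∧ ∀ j, (∑ i, ((W i j : ℕ))) = 1),
        ∏ i, elem (fun j => (W i j : ℕ)) (Polynomial.X : Polynomial ℚ)) ∧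
    (k = n →
      Homologous (elem ((fun _ => 1) : Coord n) ((Polynomial.X : Polynomial ℚ) ^ n))
        (n.factorial •
          ∏ i : Fin n, elem (fun j => if j = i then 1 else 0)
            (Polynomial.X : Polynomial ℚ))) ∧
    (n < k →
      Homologous (elem ((fun _ => 1) : Coord n) ((Polynomial.X : Polynomial ℚ) ^ k)) 0) := by
  refine ⟨part1 n k hk, ?_, ?_⟩
  · intro hkn
    subst hkn
    refine (part1 k k hk).of_homIn_eq ?_
    rw [← filt_eq_filter k k]
    have e3 : ∀ W : Fin k → (Fin k → Fin 2),
        (∏ i, elem (fun j => ((W i j : ℕ))) (Polynomial.X : Polynomial ℚ))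
          = ∏ i, tv (cv (W i)) :=
      fun W => Finset.prod_congr rfl (fun i _ => by rw [elem_X]; rfl)
    rw [Finset.sum_congr rfl (fun W _ => e3 W), perm_sum]
    congr 1
    refine Finset.prod_congr rfl (fun i _ => ?_)
    rw [elem_X]
  · intro hnk
    refine (part1 n k hk).of_homIn_eq ?_
    refine Finset.sum_eq_zero (fun W hW => ?_)
    rw [← filt_eq_filter n k] at hW
    exact (filt_gt_empty hnk W hW).elim
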